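/- A point x* = (x_0*, x̄*) is the optimal solution of Inf_Q(P) if and only if ‖p̄_i − x̄*‖ ≤ p_{i0} − x_0* for all i = 1, …, m, and x̄* lies in the convex hull of the set {p̄_i : ‖p̄_i − x̄*‖ = p_{i0} − x_0*}. -/

import Mathlib

open RealInnerProductSpace

/-- `x` is the optimal solution of `Inf_Q(P)` iff `x` is feasible and `x̄` lies in the
convex hull of the points `p̄_i` whose constraints are active at `x`. -/
theorem stmt_7 (d m : ℕ) (hd : 1 ≤ d) (hm : 1 ≤ m)
    (p : Fin m → ℝ × EuclideanSpace ℝ (Fin d))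
    (x : ℝ × EuclideanSpace ℝ (Fin d)) :
    ((∀ i, ‖(p i).2 - x.2‖ ≤ (p i).1 - x.1) ∧
      ∀ y : ℝ × EuclideanSpace ℝ (Fin d),
        (∀ i, ‖(p i).2 - y.2‖ ≤ (p i).1 - y.1) → y.1 ≤ x.1)
    ↔ ((∀ i, ‖(p i).2 - x.2‖ ≤ (p i).1 - x.1) ∧
        x.2 ∈ convexHull ℝ
          {q | ∃ i, (p i).2 = q ∧ ‖(p i).2 - x.2‖ = (p i).1 - x.1}) := by
  have hne : Nonempty (Fin m) := ⟨⟨0, hm⟩⟩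
  have huniv : (Finset.univ : Finset (Fin m)).Nonempty := Finset.univ_nonempty
  set S : Set (EuclideanSpace ℝ (Fin d)) :=
    {q | ∃ i, (p i).2 = q ∧ ‖(p i).2 - x.2‖ = (p i).1 - x.1} with hSdef
  constructor
  · rintro ⟨hfeas, hopt⟩
    refine ⟨hfeas, ?_⟩
    by_contra hx
    -- find a point where all constraints are strict
    have key : ∃ y2 : EuclideanSpace ℝ (Fin d), ∀ i, ‖(p i).2 - y2‖ < (p i).1 - x.1 := by
      by_cases hS : S.Nonempty
      · -- separate x.2 from convexHull S
        have hSfin : S.Finite := by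
          apply (Set.finite_range fun i => (p i).2).subset
          rintro q ⟨i, hq, -⟩; exact ⟨i, hq⟩
        obtain ⟨f, u, hfx, hfs⟩ :=
          geometric_hahn_banach_point_closed (convex_convexHull ℝ S)
            (hSfin.isClosed_convexHull ℝ) hx
        set v : EuclideanSpace ℝ (Fin d) :=
          (InnerProductSpace.toDual ℝ (EuclideanSpace ℝ (Fin d))).symm f with hv
        have hvapp : ∀ z, ⟪v, z⟫ = f z := fun z => InnerProductSpace.toDual_symm_apply
        set ε : ℝ := u - f x.2 with hε
        have hε0 : 0 < ε := by simp [hε]; linarith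
        have hinS : ∀ q ∈ S, ε < ⟪v, q - x.2⟫ := by
          intro q hq
          have := hfs q (subset_convexHull ℝ S hq)
          rw [inner_sub_right, hvapp, hvapp]
          simp [hε]; linarith
        have hv0 : v ≠ 0 := by
          obtain ⟨q, hq⟩ := hS
          intro h
          have := hinS q hq
          rw [h, inner_zero_left] at this
          linarith
        have hnv : 0 < ‖v‖ := norm_pos_iff.2 hv0
        -- per-constraint time bounds
        have hti : ∀ i : Fin m, ∃ ti : ℝ, 0 < ti ∧ ∀ t : ℝ, 0 < t → t ≤ ti →
            ‖(p i).2 - (x.2 + t • v)‖ < (p i).1 - x.1 := by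
          intro i
          by_cases hact : ‖(p i).2 - x.2‖ = (p i).1 - x.1
          · refine ⟨ε / ‖v‖ ^ 2, by positivity, fun t ht hle => ?_⟩
            have hmem : (p i).2 ∈ S := ⟨i, rfl, hact⟩
            have hip : ε < ⟪v, (p i).2 - x.2⟫ := hinS _ hmem
            have hexp : ‖((p i).2 - x.2) - t • v‖ ^ 2 =
                ‖(p i).2 - x.2‖ ^ 2 - 2 * (t * ⟪v, (p i).2 - x.2⟫) + t ^ 2 * ‖v‖ ^ 2 := by
              rw [norm_sub_sq_real, real_inner_smul_right, norm_smul]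
              rw [real_inner_comm]
              simp [abs_of_pos ht, mul_pow]
            have h1 : t * ‖v‖ ^ 2 ≤ ε :=
              calc t * ‖v‖ ^ 2 ≤ (ε / ‖v‖ ^ 2) * ‖v‖ ^ 2 :=
                    mul_le_mul_of_nonneg_right hle (by positivity)
                _ = ε := by field_simp
            have heq : (p i).2 - (x.2 + t • v) = ((p i).2 - x.2) - t • v := by
              abel
            have hsq : ‖((p i).2 - x.2) - t • v‖ ^ 2 < ‖(p i).2 - x.2‖ ^ 2 := by
              rw [hexp]
              nlinarith
            rw [heq, ← hact]
            nlinarith [norm_nonneg (((p i).2 - x.2) - t • v), norm_nonneg ((p i).2 - x.2)]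
          · have hsl : 0 < (p i).1 - x.1 - ‖(p i).2 - x.2‖ :=
              lt_of_le_of_ne (by linarith [hfeas i]) (by intro h; apply hact; linarith)
            refine ⟨((p i).1 - x.1 - ‖(p i).2 - x.2‖) / (2 * ‖v‖), by positivity,
              fun t ht hle => ?_⟩
            have heq : (p i).2 - (x.2 + t • v) = ((p i).2 - x.2) - t • v := by abel
            have : ‖((p i).2 - x.2) - t • v‖ ≤ ‖(p i).2 - x.2‖ + t * ‖v‖ := by
              calc ‖((p i).2 - x.2) - t • v‖ ≤ ‖(p i).2 - x.2‖ + ‖t • v‖ := norm_sub_le _ _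
                _ = ‖(p i).2 - x.2‖ + t * ‖v‖ := by rw [norm_smul, Real.norm_eq_abs, abs_of_pos ht]
            have htv : t * ‖v‖ ≤ ((p i).1 - x.1 - ‖(p i).2 - x.2‖) / 2 := by
              rw [le_div_iff₀ (by norm_num : (0:ℝ) < 2)]
              calc t * ‖v‖ * 2 ≤ (((p i).1 - x.1 - ‖(p i).2 - x.2‖) / (2 * ‖v‖)) * ‖v‖ * 2 := by
                    apply mul_le_mul_of_nonneg_right
                      (mul_le_mul_of_nonneg_right hle (norm_nonneg v)) (by norm_num)
                _ = (p i).1 - x.1 - ‖(p i).2 - x.2‖ := by field_simp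
            rw [heq]
            linarith
        choose ti hti0 htile using hti
        set t : ℝ := Finset.univ.inf' huniv ti with htdef
        have ht0 : 0 < t := by
          rw [htdef, Finset.lt_inf'_iff]
          exact fun i _ => hti0 i
        exact ⟨x.2 + t • v, fun i =>
          htile i t ht0 (Finset.inf'_le ti (Finset.mem_univ i))⟩
      · -- no active constraints: all strict at x.2 itself
        refine ⟨x.2, fun i => ?_⟩
        refine lt_of_le_of_ne (hfeas i) ?_
        intro h
        exact hS ⟨(p i).2, i, rfl, h⟩
    obtain ⟨y2, hy2⟩ := key
    set δ : ℝ := Finset.univ.inf' huniv (fun i => (p i).1 - x.1 - ‖(p i).2 - y2‖) with hδdef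
    have hδ0 : 0 < δ := by
      rw [hδdef, Finset.lt_inf'_iff]
      intro i _
      linarith [hy2 i]
    have hfeas' : ∀ i, ‖(p i).2 - (x.1 + δ, y2).2‖ ≤ (p i).1 - (x.1 + δ, y2).1 := by
      intro i
      have := Finset.inf'_le (fun i => (p i).1 - x.1 - ‖(p i).2 - y2‖) (Finset.mem_univ i)
      simp only at this ⊢
      linarith [this]
    have := hopt _ hfeas'
    simp only at this
    linarith
  · rintro ⟨hfeas, hhull⟩
    refine ⟨hfeas, ?_⟩
    intro y hy
    rw [convexHull_eq] at hhull
    obtain ⟨ι, s, w, z, hw0, hw1, hz, hcm⟩ := hhull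
    rw [Finset.centerMass_eq_of_sum_1 _ _ hw1] at hcm
    -- key per-point inequality
    have key : ∀ j ∈ s, (y.1 - x.1) * ‖z j - x.2‖ ≤ ⟪y.2 - x.2, z j - x.2⟫ := by
      intro j hj
      obtain ⟨i, hpi, hact⟩ := hz j hj
      rcases eq_or_lt_of_le (norm_nonneg (z j - x.2)) with h0 | h0
      · have : z j - x.2 = 0 := by
          rw [← norm_eq_zero]; exact h0.symm
        rw [this, inner_zero_right]
        simp
      · have hfy : ‖z j - y.2‖ ≤ (p i).1 - y.1 := by rw [← hpi]; exact hy i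
        have hxa : ‖z j - x.2‖ = (p i).1 - x.1 := by rw [← hpi]; exact hact
        have hcs : ⟪z j - y.2, z j - x.2⟫ ≤ ‖z j - y.2‖ * ‖z j - x.2‖ :=
          real_inner_le_norm _ _
        have hiden : ⟪y.2 - x.2, z j - x.2⟫ =
            ⟪z j - x.2, z j - x.2⟫ - ⟪z j - y.2, z j - x.2⟫ := by
          rw [← inner_sub_left]; congr 1; abel
        rw [hiden, real_inner_self_eq_norm_sq]
        nlinarith [norm_nonneg (z j - y.2)]
    -- sum the inequalities
    have hsum0 : ∑ j ∈ s, w j • (z j - x.2) = 0 := by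
      have : ∑ j ∈ s, w j • (z j - x.2) =
          (∑ j ∈ s, w j • z j) - (∑ j ∈ s, w j) • x.2 := by
        rw [Finset.sum_smul, ← Finset.sum_sub_distrib]
        exact Finset.sum_congr rfl fun j _ => smul_sub _ _ _
      rw [this, hcm, hw1, one_smul, sub_self]
    have hinner0 : ∑ j ∈ s, w j * ⟪y.2 - x.2, z j - x.2⟫ = 0 := by
      have : ∑ j ∈ s, w j * ⟪y.2 - x.2, z j - x.2⟫ =
          ⟪y.2 - x.2, ∑ j ∈ s, w j • (z j - x.2)⟫ := by
        rw [inner_sum]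
        exact Finset.sum_congr rfl fun j _ => (real_inner_smul_right _ _ _).symm
      rw [this, hsum0, inner_zero_right]
    have hL : (y.1 - x.1) * (∑ j ∈ s, w j * ‖z j - x.2‖) ≤ 0 := by
      calc (y.1 - x.1) * (∑ j ∈ s, w j * ‖z j - x.2‖)
          = ∑ j ∈ s, w j * ((y.1 - x.1) * ‖z j - x.2‖) := by
            rw [Finset.mul_sum]; exact Finset.sum_congr rfl fun j _ => by ring
        _ ≤ ∑ j ∈ s, w j * ⟪y.2 - x.2, z j - x.2⟫ :=
            Finset.sum_le_sum fun j hj =>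
              mul_le_mul_of_nonneg_left (key j hj) (hw0 j hj)
        _ = 0 := hinner0
    have hA0 : 0 ≤ ∑ j ∈ s, w j * ‖z j - x.2‖ :=
      Finset.sum_nonneg fun j hj => mul_nonneg (hw0 j hj) (norm_nonneg _)
    rcases eq_or_lt_of_le hA0 with hA | hA
    · -- all terms vanish; find j with positive weight, then z j = x.2
      have hall : ∀ j ∈ s, w j * ‖z j - x.2‖ = 0 :=
        (Finset.sum_eq_zero_iff_of_nonneg fun j hj =>
          mul_nonneg (hw0 j hj) (norm_nonneg _)).1 hA.symm
      have hjpos : ∃ j ∈ s, 0 < w j := by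
        by_contra h
        push_neg at h
        have : ∑ j ∈ s, w j = 0 :=
          Finset.sum_eq_zero fun j hj => le_antisymm (h j hj) (hw0 j hj)
        rw [hw1] at this; norm_num at this
      obtain ⟨j, hj, hwj⟩ := hjpos
      have hnz : ‖z j - x.2‖ = 0 := by
        have := hall j hj
        rcases mul_eq_zero.1 this with h | h
        · exact absurd h (ne_of_gt hwj)
        · exact h
      obtain ⟨i, hpi, hact⟩ := hz j hj
      have hxa : ‖z j - x.2‖ = (p i).1 - x.1 := by rw [← hpi]; exact hact
      have hfy : ‖z j - y.2‖ ≤ (p i).1 - y.1 := by rw [← hpi]; exact hy i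
      have := norm_nonneg (z j - y.2)
      linarith
    · nlinarith
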